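/- Let ε ∈ [0,1) and let k ≥ 1 be an integer. Then R_ε attains no local maximum on the boundary of the cube [0,1]^k: if (δ₀,…,δ_{k−1}) ∈ [0,1]^k has some coordinate equal to 0 or to 1, then (δ₀,…,δ_{k−1}) is not a local maximum point of the restriction of R_ε to [0,1]^k. -/

import Mathlib

/-- The binary entropy function (base 2), with `H2 0 = H2 1 = 0`. -/
noncomputable def H2 (x : ℝ) : ℝ := -(x * Real.logb 2 x) - (1 - x) * Real.logb 2 (1 - x)

lemma H2_zero : H2 0 = 0 := by simp [H2]
lemma H2_one : H2 1 = 0 := by simp [H2]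
lemma H2_symm (x : ℝ) : H2 (1 - x) = H2 x := by simp [H2]; ring

lemma H2_nonneg {x : ℝ} (h0 : 0 ≤ x) (h1 : x ≤ 1) : 0 ≤ H2 x := by
  have l1 : Real.logb 2 x ≤ 0 := Real.logb_nonpos one_lt_two h0 h1
  have l2 : Real.logb 2 (1 - x) ≤ 0 := Real.logb_nonpos one_lt_two (by linarith) (by linarith)
  have : 0 ≤ 1 - x := by linarith
  unfold H2
  nlinarith [mul_nonpos_of_nonneg_of_nonpos h0 l1, mul_nonpos_of_nonneg_of_nonpos this l2]

lemma H2_ge {t : ℝ} (h0 : 0 < t) (h1 : t < 1) : t * (-Real.logb 2 t) ≤ H2 t := by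
  have l2 : Real.logb 2 (1 - t) ≤ 0 := Real.logb_nonpos one_lt_two (by linarith) (by linarith)
  have : (0:ℝ) ≤ 1 - t := by linarith
  unfold H2
  nlinarith [mul_nonpos_of_nonneg_of_nonpos this l2]
open Filter Set in
lemma H2_key (c C : ℝ) (hc : 0 < c) :
    ∀ᶠ t in nhdsWithin 0 (Set.Ioo (0:ℝ) 1), C * t < c * H2 t := by
  set T : ℝ := min ((2:ℝ) ^ (-(C/c)) : ℝ) 1 with hTdef
  have hT : 0 < T := lt_min (Real.rpow_pos_of_pos two_pos _) one_pos
  have hev : ∀ᶠ t in nhdsWithin 0 (Set.Ioo (0:ℝ) 1), t < T :=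
    eventually_nhdsWithin_of_eventually_nhds (eventually_lt_nhds hT)
  filter_upwards [hev, eventually_mem_nhdsWithin] with t htT ht
  obtain ⟨h0, h1⟩ := ht
  have hlt : t < (2:ℝ) ^ (-(C/c)) := lt_of_lt_of_le htT (min_le_left _ _)
  have hlog : Real.logb 2 t < -(C/c) :=
    (Real.logb_lt_iff_lt_rpow one_lt_two h0).mpr hlt
  have h2 : C < c * (-Real.logb 2 t) := by
    have := (div_lt_iff₀ hc).mp (by linarith : C / c < -Real.logb 2 t)
    linarith
  have h3 : C * t < (c * (-Real.logb 2 t)) * t := mul_lt_mul_of_pos_right h2 h0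
  have h4 : c * (t * (-Real.logb 2 t)) ≤ c * H2 t :=
    mul_le_mul_of_nonneg_left (H2_ge h0 h1) hc.le
  nlinarith

/-- The function `R_ε(δ₀,…,δ_{k−1})`. -/
noncomputable def Rfun (ε : ℝ) (k : ℕ) (δ : ℕ → ℝ) : ℝ :=
  (∑ i ∈ Finset.range k, (1 - ε) ^ (i + 1) * H2 (δ i) * ∏ m ∈ Finset.range i, δ m) /
  (1 + ∑ i ∈ Finset.range k, (1 - ε) ^ (i + 1) * ∏ m ∈ Finset.range (i + 1), δ m)

open Finset in
lemma Rfun_slice (ε : ℝ) (k j : ℕ) (hjk : j < k) (δ : ℕ → ℝ) (t : ℝ) :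
    Rfun ε k (Function.update δ j t) =
      ((∑ i ∈ range j, (1-ε)^(i+1) * H2 (δ i) * ∏ m ∈ range i, δ m)
        + ((1-ε)^(j+1) * ∏ m ∈ range j, δ m) * H2 t
        + (∑ i ∈ Ico (j+1) k, (1-ε)^(i+1) * H2 (δ i) * ∏ m ∈ (range i).erase j, δ m) * t) /
      ((1 + ∑ i ∈ range j, (1-ε)^(i+1) * ∏ m ∈ range (i+1), δ m)
        + (∑ i ∈ Ico j k, (1-ε)^(i+1) * ∏ m ∈ (range (i+1)).erase j, δ m) * t) := by
  classical
  unfold Rfun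
  congr 1
  · -- numerator
    have hsplit : range k = range j ∪ Ico j k := by
      rw [range_eq_Ico, ← Finset.Ico_union_Ico_eq_Ico (Nat.zero_le j) hjk.le, range_eq_Ico]
    rw [hsplit, Finset.sum_union (by rw [range_eq_Ico]; exact Finset.Ico_disjoint_Ico_consecutive 0 j k)]
    rw [Finset.sum_eq_sum_Ico_succ_bot hjk, ← add_assoc]
    congr 1
    · congr 1
      · apply Finset.sum_congr rfl
        intro i hi
        rw [mem_range] at hi
        rw [Function.update_of_ne hi.ne]
        congr 1
        apply Finset.prod_congr rfl
        intro m hm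
        rw [mem_range] at hm
        exact Function.update_of_ne (by omega) _ _
      · rw [Function.update_self]
        rw [show (∏ m ∈ range j, Function.update δ j t m) = ∏ m ∈ range j, δ m from
          Finset.prod_congr rfl fun m hm => Function.update_of_ne (mem_range.mp hm).ne _ _]
        ring
    · rw [Finset.sum_mul]
      apply Finset.sum_congr rfl
      intro i hi
      rw [Finset.mem_Ico] at hi
      have hji : j ∈ range i := mem_range.mpr (by omega)
      rw [Function.update_of_ne (by omega), ← Finset.prod_erase_mul _ _ hji, Function.update_self]
      rw [show (∏ m ∈ (range i).erase j, Function.update δ j t m) = ∏ m ∈ (range i).erase j, δ m from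
        Finset.prod_congr rfl fun m hm => Function.update_of_ne (Finset.ne_of_mem_erase hm) _ _]
      ring
  · -- denominator
    have hsplit : range k = range j ∪ Ico j k := by
      rw [range_eq_Ico, ← Finset.Ico_union_Ico_eq_Ico (Nat.zero_le j) hjk.le, range_eq_Ico]
    rw [hsplit, Finset.sum_union (by rw [range_eq_Ico]; exact Finset.Ico_disjoint_Ico_consecutive 0 j k)]
    have h1 : (∑ i ∈ range j, (1-ε)^(i+1) * ∏ m ∈ range (i+1), Function.update δ j t m)
        = ∑ i ∈ range j, (1-ε)^(i+1) * ∏ m ∈ range (i+1), δ m := by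
      apply Finset.sum_congr rfl
      intro i hi
      rw [mem_range] at hi
      congr 1
      apply Finset.prod_congr rfl
      intro m hm
      rw [mem_range] at hm
      exact Function.update_of_ne (by omega) _ _
    rw [h1, add_assoc]
    congr 1
    · rw [Finset.sum_mul]
      congr 1
      apply Finset.sum_congr rfl
      intro i hi
      rw [Finset.mem_Ico] at hi
      have hji : j ∈ range (i+1) := mem_range.mpr (by omega)
      rw [← Finset.prod_erase_mul _ _ hji, Function.update_self]
      rw [show (∏ m ∈ (range (i+1)).erase j, Function.update δ j t m) = ∏ m ∈ (range (i+1)).erase j, δ m from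
        Finset.prod_congr rfl fun m hm => Function.update_of_ne (Finset.ne_of_mem_erase hm) _ _]
      ring


open Filter Set Finset

/-- Let `ε ∈ [0,1)` and `k ≥ 1`.  `R_ε` attains no local maximum on the boundary of the
cube `[0,1]^k`: if some coordinate of `(δ₀,…,δ_{k−1}) ∈ [0,1]^k` equals `0` or `1`, then
this point is not a local maximum point of the restriction of `R_ε` to the cube. -/
theorem no_local_max_on_boundary
    (ε : ℝ) (hε : ε ∈ Set.Ico (0 : ℝ) 1) (k : ℕ) (hk : 1 ≤ k)
    (δ : ℕ → ℝ) (hδ : ∀ i < k, δ i ∈ Set.Icc (0 : ℝ) 1)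
    (hbdry : ∃ j < k, δ j = 0 ∨ δ j = 1) :
    ¬ IsLocalMaxOn (fun x : ℕ → ℝ => Rfun ε k x)
        {x : ℕ → ℝ | ∀ i < k, x i ∈ Set.Icc (0 : ℝ) 1} δ := by
  classical
  intro hmax
  obtain ⟨hε0, hε1⟩ := hε
  have heps : (0:ℝ) < 1 - ε := by linarith
  have hex : ∃ n, n < k ∧ (δ n = 0 ∨ δ n = 1) := by
    obtain ⟨j, h1, h2⟩ := hbdry; exact ⟨j, h1, h2⟩
  set j := Nat.find hex with hjdef
  obtain ⟨hjk, hj01⟩ : j < k ∧ (δ j = 0 ∨ δ j = 1) := Nat.find_spec hex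
  have hmin : ∀ m, m < j → 0 < δ m ∧ δ m < 1 := by
    intro m hm
    have hmk : m < k := lt_trans hm hjk
    have h := Nat.find_min hex hm
    push_neg at h
    obtain ⟨h0, h1⟩ := h hmk
    obtain ⟨hl, hu⟩ := hδ m hmk
    exact ⟨lt_of_le_of_ne hl (Ne.symm h0), lt_of_le_of_ne hu h1⟩
  set A := ∑ i ∈ Finset.range j, (1-ε)^(i+1) * H2 (δ i) * ∏ m ∈ Finset.range i, δ m with hAdef
  set c := (1-ε)^(j+1) * ∏ m ∈ Finset.range j, δ m with hcdef
  set b := ∑ i ∈ Finset.Ico (j+1) k, (1-ε)^(i+1) * H2 (δ i) * ∏ m ∈ (Finset.range i).erase j, δ m with hbdef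
  set d0 := 1 + ∑ i ∈ Finset.range j, (1-ε)^(i+1) * ∏ m ∈ Finset.range (i+1), δ m with hd0def
  set e := ∑ i ∈ Finset.Ico j k, (1-ε)^(i+1) * ∏ m ∈ (Finset.range (i+1)).erase j, δ m with hedef
  have hslice : ∀ t : ℝ, Rfun ε k (Function.update δ j t) = (A + c * H2 t + b * t) / (d0 + e * t) :=
    fun t => Rfun_slice ε k j hjk δ t
  have hcpos : 0 < c :=
    mul_pos (pow_pos heps _) (Finset.prod_pos (fun m hm => (hmin m (Finset.mem_range.mp hm)).1))
  have hApos : 0 ≤ A := by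
    apply Finset.sum_nonneg
    intro i hi
    have hik : i < k := lt_trans (Finset.mem_range.mp hi) hjk
    have := hδ i hik
    refine mul_nonneg (mul_nonneg (pow_pos heps _).le (H2_nonneg this.1 this.2)) ?_
    exact Finset.prod_nonneg fun m hm =>
      (hδ m (lt_trans (Finset.mem_range.mp hm) hik)).1
  have hbpos : 0 ≤ b := by
    apply Finset.sum_nonneg
    intro i hi
    have hik : i < k := (Finset.mem_Ico.mp hi).2
    have := hδ i hik
    refine mul_nonneg (mul_nonneg (pow_pos heps _).le (H2_nonneg this.1 this.2)) ?_
    exact Finset.prod_nonneg fun m hm =>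
      (hδ m (lt_trans (Finset.mem_range.mp (Finset.mem_of_mem_erase hm)) hik)).1
  have hd0pos : 1 ≤ d0 := by
    have : (0:ℝ) ≤ ∑ i ∈ Finset.range j, (1-ε)^(i+1) * ∏ m ∈ Finset.range (i+1), δ m := by
      apply Finset.sum_nonneg
      intro i hi
      have hik : i < k := lt_trans (Finset.mem_range.mp hi) hjk
      refine mul_nonneg (pow_pos heps _).le ?_
      exact Finset.prod_nonneg fun m hm =>
        (hδ m (lt_of_lt_of_le (Finset.mem_range.mp hm) hik)).1
    rw [hd0def]; linarith
  have hepos : 0 ≤ e := by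
    apply Finset.sum_nonneg
    intro i hi
    have hik : i < k := (Finset.mem_Ico.mp hi).2
    refine mul_nonneg (pow_pos heps _).le ?_
    exact Finset.prod_nonneg fun m hm =>
      (hδ m (lt_of_lt_of_le (Finset.mem_range.mp (Finset.mem_of_mem_erase hm)) hik)).1
  -- continuity of the slice map
  have hu_cont : Continuous (fun t : ℝ => Function.update δ j t) := by
    apply continuous_pi
    intro i
    by_cases hij : i = j
    · subst hij
      simp only [Function.update_self]
      exact continuous_id
    · simp only [Function.update_of_ne hij]
      exact continuous_const
  have hmaps : Set.MapsTo (fun t : ℝ => Function.update δ j t) (Set.Ioo (0:ℝ) 1)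
      {x : ℕ → ℝ | ∀ i < k, x i ∈ Set.Icc (0 : ℝ) 1} := by
    intro t ht i hik
    by_cases hij : i = j
    · subst hij
      simp only [Function.update_self]
      exact ⟨ht.1.le, ht.2.le⟩
    · simp only [Function.update_of_ne hij]
      exact hδ i hik
  rcases hj01 with hj0 | hj1
  · -- δ j = 0
    have hu0 : Function.update δ j (0:ℝ) = δ := by
      rw [← hj0]; exact Function.update_eq_self j δ
    have hneBot : (nhdsWithin (0:ℝ) (Set.Ioo (0:ℝ) 1)).NeBot := by
      rw [← mem_closure_iff_nhdsWithin_neBot, closure_Ioo (by norm_num : (0:ℝ) ≠ 1)]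
      exact ⟨le_refl 0, zero_le_one⟩
    have htend : Tendsto (fun t : ℝ => Function.update δ j t)
        (nhdsWithin (0:ℝ) (Set.Ioo (0:ℝ) 1))
        (nhdsWithin δ {x : ℕ → ℝ | ∀ i < k, x i ∈ Set.Icc (0 : ℝ) 1}) := by
      have := (hu_cont.continuousAt (x := (0:ℝ))).continuousWithinAt.tendsto_nhdsWithin hmaps
      rwa [hu0] at this
    have hev1 : ∀ᶠ t in nhdsWithin (0:ℝ) (Set.Ioo (0:ℝ) 1),
        Rfun ε k (Function.update δ j t) ≤ Rfun ε k δ := htend.eventually hmax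
    have hev2 := H2_key c (A*e) hcpos
    obtain ⟨t, h1, h2, ht⟩ := (hev1.and (hev2.and eventually_mem_nhdsWithin)).exists
    have hRδ : Rfun ε k δ = A / d0 := by
      rw [← hu0, hslice 0, H2_zero]
      norm_num
    have hH2 : 0 ≤ H2 t := H2_nonneg ht.1.le ht.2.le
    have hden : (0:ℝ) < d0 + e * t := by nlinarith [ht.1, ht.2]
    have hgt : A / d0 < (A + c * H2 t + b * t) / (d0 + e * t) := by
      rw [div_lt_div_iff₀ (by linarith) hden]
      nlinarith [mul_nonneg (mul_nonneg hcpos.le hH2) (by linarith : (0:ℝ) ≤ d0 - 1),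
        mul_nonneg (mul_nonneg hbpos ht.1.le) (by linarith : (0:ℝ) ≤ d0), ht.1]
    rw [hslice t, hRδ] at h1
    linarith
  · -- δ j = 1
    have hu1 : Function.update δ j (1:ℝ) = δ := by
      rw [← hj1]; exact Function.update_eq_self j δ
    have hneBot : (nhdsWithin (1:ℝ) (Set.Ioo (0:ℝ) 1)).NeBot := by
      rw [← mem_closure_iff_nhdsWithin_neBot, closure_Ioo (by norm_num : (0:ℝ) ≠ 1)]
      exact ⟨zero_le_one, le_refl 1⟩
    have htend : Tendsto (fun t : ℝ => Function.update δ j t)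
        (nhdsWithin (1:ℝ) (Set.Ioo (0:ℝ) 1))
        (nhdsWithin δ {x : ℕ → ℝ | ∀ i < k, x i ∈ Set.Icc (0 : ℝ) 1}) := by
      have := (hu_cont.continuousAt (x := (1:ℝ))).continuousWithinAt.tendsto_nhdsWithin hmaps
      rwa [hu1] at this
    have hev1 : ∀ᶠ t in nhdsWithin (1:ℝ) (Set.Ioo (0:ℝ) 1),
        Rfun ε k (Function.update δ j t) ≤ Rfun ε k δ := htend.eventually hmax
    have hmap : Tendsto (fun t : ℝ => 1 - t) (nhdsWithin (1:ℝ) (Set.Ioo (0:ℝ) 1))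
        (nhdsWithin (0:ℝ) (Set.Ioo (0:ℝ) 1)) := by
      have hc' : ContinuousWithinAt (fun t : ℝ => 1 - t) (Set.Ioo (0:ℝ) 1) 1 :=
        ((continuous_const.sub continuous_id).continuousAt).continuousWithinAt
      have hm' : Set.MapsTo (fun t : ℝ => 1 - t) (Set.Ioo (0:ℝ) 1) (Set.Ioo (0:ℝ) 1) := by
        intro x hx
        simp only [Set.mem_Ioo]
        constructor <;> linarith [hx.1, hx.2]
      have := hc'.tendsto_nhdsWithin hm'
      simpa only [show (1:ℝ) - 1 = 0 from by norm_num] using this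
    have hev2 : ∀ᶠ t in nhdsWithin (1:ℝ) (Set.Ioo (0:ℝ) 1), b * d0 * (1 - t) < c * H2 t := by
      filter_upwards [hmap.eventually (H2_key c (b*d0) hcpos)] with t ht
      rwa [H2_symm] at ht
    obtain ⟨t, h1, h2, ht⟩ := (hev1.and (hev2.and eventually_mem_nhdsWithin)).exists
    have hRδ : Rfun ε k δ = (A + b) / (d0 + e) := by
      rw [← hu1, hslice 1, H2_one]
      norm_num
    have hH2 : 0 ≤ H2 t := H2_nonneg ht.1.le ht.2.le
    have hden : (0:ℝ) < d0 + e * t := by nlinarith [ht.1, ht.2]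
    have hgt : (A + b) / (d0 + e) < (A + c * H2 t + b * t) / (d0 + e * t) := by
      rw [div_lt_div_iff₀ (by linarith) hden]
      nlinarith [mul_nonneg (mul_nonneg hcpos.le hH2) (by linarith : (0:ℝ) ≤ d0 + e - 1),
        mul_nonneg (mul_nonneg hApos hepos) (by linarith [ht.2] : (0:ℝ) ≤ 1 - t), ht.2]
    rw [hslice t, hRδ] at h1
    linarith
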